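/- Let B be an M×M orthogonal matrix with columns b₁,…,b_M and Σ* positive definite. Among all diagonal matrices H with positive entries, the function H ↦ L(B H Bᵀ, Σ*) = −(1/2)(M log 2π + log det(BHBᵀ) + tr((BHBᵀ)⁻¹Σ*)) is uniquely maximized by H* = diag(h₁*,…,h_M*) with hᵢ* = bᵢᵀ Σ* bᵢ. -/

import Mathlib

open Matrix Finset

/-- Expected Gaussian log-likelihood `L(Σ, Σ*)`. -/
noncomputable def LL (M : ℕ) (S T : Matrix (Fin M) (Fin M) ℝ) : ℝ :=
  -(1 / 2) * ((M : ℝ) * Real.log (2 * Real.pi) + Real.log S.det + (S⁻¹ * T).trace)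

section aux
variable {M : ℕ} (B Ss : Matrix (Fin M) (Fin M) ℝ)

lemma tpos (hB : B.transpose * B = 1) (hSs : Ss.PosDef) (i : Fin M) :
    0 < (B.transpose * Ss * B) i i := by
  have hx : (fun k => B k i) ≠ 0 := by
    intro h
    have h1 : (B.transpose * B) i i = (1 : Matrix (Fin M) (Fin M) ℝ) i i := by rw [hB]
    have hk : ∀ k, B k i = 0 := fun k => congrFun h k
    have h2 : (B.transpose * B) i i = 0 := by simp [Matrix.mul_apply, hk]
    rw [hB] at h2; simp [Matrix.one_apply] at h2
  have := hSs.dotProduct_mulVec_pos hx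
  refine lt_of_lt_of_eq this (Eq.symm ?_)
  simp [Matrix.mul_apply, dotProduct, Matrix.mulVec, Finset.mul_sum, Finset.sum_mul]
  rw [Finset.sum_comm]
  congr 1; ext k; congr 1; ext j; ring

lemma LLform (hB : B.transpose * B = 1) (d : Fin M → ℝ) (hd : ∀ i, 0 < d i) :
    LL M (B * Matrix.diagonal d * B.transpose) Ss =
      -(1 / 2) * ((M : ℝ) * Real.log (2 * Real.pi) +
        ∑ i, (Real.log (d i) + (B.transpose * Ss * B) i i / d i)) := by
  have hBB : B * B.transpose = 1 := mul_eq_one_comm.mp hB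
  have hdetB : B.det * B.transpose.det = 1 := by
    have := congrArg Matrix.det hBB; rwa [det_mul, det_one] at this
  have hdet : (B * Matrix.diagonal d * B.transpose).det = ∏ i, d i := by
    rw [det_mul, det_mul, det_diagonal]
    linear_combination (∏ i, d i) * hdetB
  have hDD : Matrix.diagonal d * Matrix.diagonal (fun i => (d i)⁻¹) = 1 := by
    rw [diagonal_mul_diagonal]
    rw [show (fun i => d i * (d i)⁻¹) = fun _ => 1 from funext fun i => mul_inv_cancel₀ (hd i).ne']
    exact diagonal_one
  have hinv : (B * Matrix.diagonal d * B.transpose)⁻¹ =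
      B * Matrix.diagonal (fun i => (d i)⁻¹) * B.transpose := by
    apply inv_eq_right_inv
    simp only [Matrix.mul_assoc]
    rw [← Matrix.mul_assoc B.transpose B, hB, one_mul,
      ← Matrix.mul_assoc (Matrix.diagonal d), hDD, one_mul, hBB]
  have htr : ((B * Matrix.diagonal d * B.transpose)⁻¹ * Ss).trace =
      ∑ i, (B.transpose * Ss * B) i i / d i := by
    rw [hinv, trace_mul_cycle, ← Matrix.mul_assoc, trace_mul_cycle, ← Matrix.mul_assoc]
    simp [Matrix.trace, Matrix.diag, Matrix.mul_diagonal, div_eq_mul_inv]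
  have hlog : Real.log ((B * Matrix.diagonal d * B.transpose).det) = ∑ i, Real.log (d i) := by
    rw [hdet, Real.log_prod (fun i _ => (hd i).ne')]
  rw [LL, htr, hlog, Finset.sum_add_distrib]
  ring

end aux

/-- Over diagonal `H` with positive entries, `H ↦ L(BHBᵀ, Σ*)` is uniquely maximized at
`H* = diag(bᵢᵀ Σ* bᵢ)`. -/
theorem stmt4 (M : ℕ) (B Ss : Matrix (Fin M) (Fin M) ℝ)
    (hB : B.transpose * B = 1) (hSs : Ss.PosDef) :
    ∀ d : Fin M → ℝ, (∀ i, 0 < d i) →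
      LL M (B * Matrix.diagonal d * B.transpose) Ss ≤
        LL M (B * Matrix.diagonal (fun i => (B.transpose * Ss * B) i i) * B.transpose) Ss ∧
      (Matrix.diagonal d ≠ Matrix.diagonal (fun i => (B.transpose * Ss * B) i i) →
        LL M (B * Matrix.diagonal d * B.transpose) Ss <
          LL M (B * Matrix.diagonal (fun i => (B.transpose * Ss * B) i i) * B.transpose) Ss) := by
  intro d hd
  set t : Fin M → ℝ := fun i => (B.transpose * Ss * B) i i with ht
  have htpos : ∀ i, 0 < t i := fun i => tpos B Ss hB hSs i
  have key : ∀ i, Real.log (t i) + t i / t i ≤ Real.log (d i) + t i / d i := by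
    intro i
    have hx : 0 < t i / d i := div_pos (htpos i) (hd i)
    have := Real.log_le_sub_one_of_pos hx
    rw [Real.log_div (htpos i).ne' (hd i).ne'] at this
    rw [div_self (htpos i).ne']
    linarith
  have keys : ∀ i, d i ≠ t i → Real.log (t i) + t i / t i < Real.log (d i) + t i / d i := by
    intro i hne
    have hx : 0 < t i / d i := div_pos (htpos i) (hd i)
    have hne1 : t i / d i ≠ 1 := by
      intro h; exact hne ((div_eq_one_iff_eq (hd i).ne').mp h).symm
    have := Real.log_lt_sub_one_of_pos hx hne1
    rw [Real.log_div (htpos i).ne' (hd i).ne'] at this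
    rw [div_self (htpos i).ne']
    linarith
  rw [LLform B Ss hB d hd, LLform B Ss hB t htpos]
  constructor
  · have : (∑ i, (Real.log (t i) + t i / t i)) ≤ ∑ i, (Real.log (d i) + t i / d i) :=
      Finset.sum_le_sum fun i _ => key i
    linarith
  · intro hne
    have hne' : d ≠ t := fun h => hne (by rw [h])
    obtain ⟨j, hj⟩ := Function.ne_iff.mp hne'
    have : (∑ i, (Real.log (t i) + t i / t i)) < ∑ i, (Real.log (d i) + t i / d i) :=
      Finset.sum_lt_sum (fun i _ => key i) ⟨j, Finset.mem_univ j, keys j hj⟩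
    linarith
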